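/- Let X₀ be a sum of N₀ i.i.d. Rademacher random variables, and let X̂₁, X̂₂ be two independent sums of N̂ i.i.d. Rademacher random variables each, all independent of X₀. Set Xᵢ = X₀ + X̂ᵢ for i = 1,2. Then for every β ≥ 0, P(X₁ ≥ β and X₂ ≥ β) ≤ 3(N₀ + N̂)·exp(-γ²/(1+ρ)), where γ = β/√(N₀ + N̂) and ρ = N₀/(N̂ + N₀). -/

import Mathlib

open MeasureTheory ProbabilityTheory Real

lemma rademacher_mgf_aux {Ω : Type*} [MeasurableSpace Ω] (μ : Measure Ω) [IsProbabilityMeasure μ]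
    {X : Ω → ℝ} (hX : Measurable X) (h1 : μ {ω | X ω = 1} = 1 / 2)
    (h2 : μ {ω | X ω = -1} = 1 / 2) (s : ℝ) :
    Integrable (fun ω => Real.exp (s * X ω)) μ ∧
      ∫ ω, Real.exp (s * X ω) ∂μ = Real.cosh s := by
  set A : Set Ω := {ω | X ω = 1} with hAdef
  set B : Set Ω := {ω | X ω = -1} with hBdef
  have hA : MeasurableSet A := hX (measurableSet_singleton 1)
  have hB : MeasurableSet B := hX (measurableSet_singleton (-1))
  have hd : Disjoint A B := by
    rw [Set.disjoint_left]
    intro ω h1' h2'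
    simp only [hAdef, hBdef, Set.mem_setOf_eq] at h1' h2'
    rw [h1'] at h2'; norm_num at h2'
  have hunion : μ (A ∪ B) = 1 := by
    rw [measure_union hd hB, h1, h2, ENNReal.add_halves]
  have hc : μ (A ∪ B)ᶜ = 0 := by
    rw [measure_compl (hA.union hB) (measure_ne_top μ _), hunion, measure_univ, tsub_self]
  have hae : ∀ᵐ ω ∂μ, X ω = 1 ∨ X ω = -1 := by
    have hset : {a | ¬(X a = 1 ∨ X a = -1)} = (A ∪ B)ᶜ := by
      ext ω; simp [hAdef, hBdef, not_or]
    rw [ae_iff, hset]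
    exact hc
  have hmeas : Measurable fun ω => Real.exp (s * X ω) := (hX.const_mul s).exp
  constructor
  · refine Integrable.mono' (integrable_const (max (Real.exp s) (Real.exp (-s))))
      hmeas.aestronglyMeasurable ?_
    filter_upwards [hae] with ω h
    rcases h with h | h <;>
      rw [Real.norm_eq_abs, abs_of_nonneg (Real.exp_pos _).le, h]
    · rw [mul_one]; exact le_max_left _ _
    · rw [mul_neg_one]; exact le_max_right _ _
  · have hcongr : (fun ω => Real.exp (s * X ω)) =ᵐ[μ]
        fun ω => Real.exp (-s) + A.indicator (fun _ => Real.exp s - Real.exp (-s)) ω := by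
      filter_upwards [hae] with ω h
      rcases h with h | h
      · have hmem : ω ∈ A := h
        rw [Set.indicator_of_mem hmem, h]
        ring_nf
      · have hnmem : ω ∉ A := by
          simp only [hAdef, Set.mem_setOf_eq, h]; norm_num
        rw [Set.indicator_of_notMem hnmem, h]
        ring_nf
    rw [integral_congr_ae hcongr,
      integral_add (integrable_const _) ((integrable_const _).indicator hA),
      integral_const, integral_indicator_const _ hA, measureReal_def, measureReal_def, h1, Real.cosh_eq]
    simp only [measure_univ, ENNReal.toReal_one, smul_eq_mul, one_mul]
    rw [ENNReal.toReal_div]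
    norm_num
    ring

/-- Let `X₀` be a sum of `N₀` i.i.d. Rademacher random variables and `X̂₁, X̂₂` two
independent sums of `N̂` i.i.d. Rademacher random variables each, all mutually
independent. With `Xᵢ = X₀ + X̂ᵢ`, for every `β ≥ 0`,
`P(X₁ ≥ β ∧ X₂ ≥ β) ≤ 3(N₀ + N̂)·exp(-γ²/(1+ρ))` where `γ = β/√(N₀+N̂)` and
`ρ = N₀/(N̂+N₀)`. -/
theorem rademacher_correlated_pair_tail
    {Ω : Type*} [MeasurableSpace Ω] (μ : Measure Ω) [IsProbabilityMeasure μ]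
    (N₀ Nh : ℕ) (hN₀ : 0 < N₀) (hNh : 0 < Nh)
    (f : (Fin N₀ ⊕ (Fin Nh ⊕ Fin Nh)) → Ω → ℝ)
    (hmeas : ∀ i, Measurable (f i))
    (hindep : iIndepFun f μ)
    (hrad : ∀ i, μ {ω | f i ω = 1} = 1 / 2 ∧ μ {ω | f i ω = -1} = 1 / 2)
    (β : ℝ) (hβ : 0 ≤ β) :
    (μ {ω | β ≤ (∑ j, f (Sum.inl j) ω) + ∑ j, f (Sum.inr (Sum.inl j)) ω ∧
            β ≤ (∑ j, f (Sum.inl j) ω) + ∑ j, f (Sum.inr (Sum.inr j)) ω}).toReal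
      ≤ 3 * ((N₀ : ℝ) + Nh) *
          Real.exp (-(β / Real.sqrt ((N₀ : ℝ) + Nh)) ^ 2 /
            (1 + (N₀ : ℝ) / ((Nh : ℝ) + N₀))) := by
  classical
  set n : ℝ := (N₀ : ℝ) + Nh with hn
  set m : ℝ := 2 * (N₀ : ℝ) + Nh with hm
  have hn_pos : (0 : ℝ) < n := by positivity
  have hm_pos : (0 : ℝ) < m := by positivity
  set t : ℝ := β / m with ht
  have ht_nonneg : 0 ≤ t := div_nonneg hβ hm_pos.le
  -- scaling functions
  set φ : (Fin N₀ ⊕ (Fin Nh ⊕ Fin Nh)) → ℝ → ℝ :=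
    fun i => Sum.elim (fun _ x => 2 * x) (fun _ x => x) i with hφ
  set g : (Fin N₀ ⊕ (Fin Nh ⊕ Fin Nh)) → Ω → ℝ := fun i => φ i ∘ f i with hg
  have hφmeas : ∀ i, Measurable (φ i) := by
    rintro (j | k)
    · exact (measurable_id.const_mul 2)
    · exact measurable_id
  have hgindep : iIndepFun g μ := hindep.comp φ hφmeas
  have hgmeas : ∀ i, Measurable (g i) := fun i => (hφmeas i).comp (hmeas i)
  -- mgf of each g i
  have hmgf : ∀ i, Integrable (fun ω => Real.exp (t * g i ω)) μ ∧
      ∫ ω, Real.exp (t * g i ω) ∂μ = Real.cosh (t * (if i.isLeft then 2 else 1)) := by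
    rintro (j | k)
    · have := rademacher_mgf_aux μ (hmeas (Sum.inl j)) (hrad (Sum.inl j)).1
        (hrad (Sum.inl j)).2 (t * 2)
      constructor
      · refine this.1.congr ?_
        filter_upwards with ω
        simp only [hg, hφ, Function.comp_apply, Sum.elim_inl]
        ring_nf
      · rw [show (∫ ω, Real.exp (t * g (Sum.inl j) ω) ∂μ)
            = ∫ ω, Real.exp (t * 2 * f (Sum.inl j) ω) ∂μ from ?_]
        · simp only [Sum.isLeft_inl, if_true]
          exact this.2
        · congr 1; funext ω
          simp only [hg, hφ, Function.comp_apply, Sum.elim_inl]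
          ring_nf
    · have := rademacher_mgf_aux μ (hmeas (Sum.inr k)) (hrad (Sum.inr k)).1
        (hrad (Sum.inr k)).2 t
      constructor
      · refine this.1.congr ?_
        filter_upwards with ω
        simp [hg, hφ]
      · rw [show (∫ ω, Real.exp (t * g (Sum.inr k) ω) ∂μ)
            = ∫ ω, Real.exp (t * f (Sum.inr k) ω) ∂μ from ?_]
        · simp only [Sum.isLeft_inr, Bool.false_eq_true, if_false, mul_one]
          exact this.2
        · congr 1
  set S : Ω → ℝ := ∑ i, g i with hS
  -- event inclusion
  have hsubset : {ω | β ≤ (∑ j, f (Sum.inl j) ω) + ∑ j, f (Sum.inr (Sum.inl j)) ω ∧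
            β ≤ (∑ j, f (Sum.inl j) ω) + ∑ j, f (Sum.inr (Sum.inr j)) ω}
      ⊆ {ω | 2 * β ≤ S ω} := by
    intro ω hω
    obtain ⟨h1, h2⟩ := hω
    have hSval : S ω = 2 * (∑ j, f (Sum.inl j) ω) + (∑ j, f (Sum.inr (Sum.inl j)) ω)
        + ∑ j, f (Sum.inr (Sum.inr j)) ω := by
      simp only [hS, hg, hφ, Fintype.sum_sum_type, Finset.sum_apply, Pi.add_apply,
        Function.comp_apply, Sum.elim_inl, Sum.elim_inr, ← Finset.mul_sum]
      ring
    simp only [Set.mem_setOf_eq, hSval]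
    linarith
  have hint : Integrable (fun ω => Real.exp (t * S ω)) μ := by
    have := ProbabilityTheory.iIndepFun.integrable_exp_mul_sum hgindep hgmeas
      (s := Finset.univ) (fun i _ => (hmgf i).1)
    simpa [hS] using this
  have hchern := ProbabilityTheory.measure_ge_le_exp_mul_mgf (X := S) (μ := μ) (t := t)
    (2 * β) ht_nonneg hint
  have hmgfS : mgf S μ t = Real.cosh (2 * t) ^ N₀ * Real.cosh t ^ (2 * Nh) := by
    rw [hS, show (∑ i, g i) = ∑ i ∈ Finset.univ, g i from rfl,
      hgindep.mgf_sum hgmeas Finset.univ]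
    rw [Fintype.prod_sum_type]
    have hl : ∀ j : Fin N₀, mgf (g (Sum.inl j)) μ t = Real.cosh (2 * t) := by
      intro j
      have := (hmgf (Sum.inl j)).2
      rw [mgf, this]
      norm_num [mul_comm]
    have hr : ∀ k : Fin Nh ⊕ Fin Nh, mgf (g (Sum.inr k)) μ t = Real.cosh t := by
      intro k
      have := (hmgf (Sum.inr k)).2
      rw [mgf, this]
      norm_num
    simp only [hl, hr, Finset.prod_const, Finset.card_univ, Fintype.card_fin,
      Fintype.prod_sum_type, Fintype.card_sum]
    ring
  -- bound the mgf
  have hcosh2 : Real.cosh (2 * t) ≤ Real.exp (2 * t ^ 2) := by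
    have := Real.cosh_le_exp_half_sq (2 * t)
    calc Real.cosh (2 * t) ≤ Real.exp ((2 * t) ^ 2 / 2) := this
      _ = Real.exp (2 * t ^ 2) := by ring_nf
  have hcosh1 : Real.cosh t ≤ Real.exp (t ^ 2 / 2) := Real.cosh_le_exp_half_sq t
  have hmgf_le : mgf S μ t ≤ Real.exp (t ^ 2 * m) := by
    rw [hmgfS]
    calc Real.cosh (2 * t) ^ N₀ * Real.cosh t ^ (2 * Nh)
        ≤ Real.exp (2 * t ^ 2) ^ N₀ * Real.exp (t ^ 2 / 2) ^ (2 * Nh) :=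
          mul_le_mul (pow_le_pow_left₀ (Real.cosh_pos _).le hcosh2 N₀)
            (pow_le_pow_left₀ (Real.cosh_pos _).le hcosh1 (2 * Nh))
            (by positivity) (by positivity)
      _ = Real.exp (t ^ 2 * m) := by
          rw [← Real.exp_nat_mul, ← Real.exp_nat_mul, ← Real.exp_add, hm]
          push_cast
          ring_nf
  have key : (μ {ω | 2 * β ≤ S ω}).toReal ≤ Real.exp (-(β ^ 2) / m) := by
    refine hchern.trans ?_
    calc Real.exp (-t * (2 * β)) * mgf S μ t
        ≤ Real.exp (-t * (2 * β)) * Real.exp (t ^ 2 * m) := by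
          gcongr
      _ = Real.exp (-t * (2 * β) + t ^ 2 * m) := (Real.exp_add _ _).symm
      _ = Real.exp (-(β ^ 2) / m) := by
          congr 1
          rw [ht]
          field_simp
          ring
  -- final comparison
  have hexp_eq : Real.exp (-(β / Real.sqrt n) ^ 2 / (1 + (N₀ : ℝ) / ((Nh : ℝ) + N₀)))
      = Real.exp (-(β ^ 2) / m) := by
    congr 1
    rw [div_pow, Real.sq_sqrt hn_pos.le]
    have hnn : (Nh : ℝ) + N₀ ≠ 0 := by positivity
    rw [hn, hm]
    field_simp
    ring
  have hfinal : (μ {ω | β ≤ (∑ j, f (Sum.inl j) ω) + ∑ j, f (Sum.inr (Sum.inl j)) ω ∧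
            β ≤ (∑ j, f (Sum.inl j) ω) + ∑ j, f (Sum.inr (Sum.inr j)) ω}).toReal
      ≤ Real.exp (-(β ^ 2) / m) := by
    refine le_trans ?_ key
    exact ENNReal.toReal_mono (measure_ne_top μ _) (measure_mono hsubset)
  rw [hexp_eq]
  refine hfinal.trans ?_
  have h1n : (1 : ℝ) ≤ 3 * n := by
    have : (1 : ℝ) ≤ n := by
      rw [hn]
      have : (1:ℝ) ≤ (N₀ : ℝ) := by exact_mod_cast hN₀
      have : (0:ℝ) ≤ (Nh : ℝ) := by positivity
      linarith
    linarith
  calc Real.exp (-(β ^ 2) / m) = 1 * Real.exp (-(β ^ 2) / m) := (one_mul _).symm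
    _ ≤ 3 * n * Real.exp (-(β ^ 2) / m) := by gcongr
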